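/- In the Baumslag–Solitar group BS(1,2) = ⟨a,t | t^{-1}at = a^2⟩, for positive integers l and l', the element t^l a^{-(2^{l'+1}-2)} t^{-l'} equals t^{l-1} a^{-(2^{l'}-1)} t^{-(l'-1)}, and since 2^{l'}-1 is odd (for l' ≥ 1), every word in {a^{±1}, t^{±1}} representing this element contains at least (l-1)+(l'-1) occurrences of t^{±1}. -/

import Mathlib

/-- Generators of the Baumslag–Solitar group `BS(1,2) = ⟨a,t ∣ t⁻¹at = a²⟩`. -/
inductive BSGen | a | t
  deriving DecidableEq

/-- The single relator `t⁻¹ a t (a²)⁻¹` of `BS(1,2)`. -/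
def bsRels : Set (FreeGroup BSGen) :=
  {(FreeGroup.of BSGen.t)⁻¹ * FreeGroup.of BSGen.a * FreeGroup.of BSGen.t *
    (FreeGroup.of BSGen.a ^ 2)⁻¹}

/-- `a` in `BS(1,2)`. -/
def A : PresentedGroup bsRels := PresentedGroup.of BSGen.a
/-- `t` in `BS(1,2)`. -/
def T : PresentedGroup bsRels := PresentedGroup.of BSGen.t

/-- Affine maps `x ↦ 2^e x + b` as a concrete group. -/
@[ext] structure Aff where
  b : ℚ
  e : ℤ

namespace Aff

instance : Mul Aff := ⟨fun x y => ⟨x.b + 2 ^ x.e * y.b, x.e + y.e⟩⟩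
instance : One Aff := ⟨⟨0, 0⟩⟩
instance : Inv Aff := ⟨fun x => ⟨-(2 ^ (-x.e) * x.b), -x.e⟩⟩

@[simp] lemma mul_b (x y : Aff) : (x * y).b = x.b + 2 ^ x.e * y.b := rfl
@[simp] lemma mul_e (x y : Aff) : (x * y).e = x.e + y.e := rfl
@[simp] lemma one_b : (1 : Aff).b = 0 := rfl
@[simp] lemma one_e : (1 : Aff).e = 0 := rfl
@[simp] lemma inv_b (x : Aff) : x⁻¹.b = -(2 ^ (-x.e) * x.b) := rfl
@[simp] lemma inv_e (x : Aff) : x⁻¹.e = -x.e := rfl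

instance : Group Aff where
  mul_assoc x y z := by
    ext
    · simp [zpow_add₀ (two_ne_zero (α := ℚ))]; ring
    · simp [add_assoc]
  one_mul x := by ext <;> simp
  mul_one x := by ext <;> simp
  inv_mul_cancel x := by
    ext
    · simp [← zpow_add₀ (two_ne_zero (α := ℚ))]
    · simp

end Aff

/-- Images of the generators: `a ↦ (x ↦ x + 1)`, `t ↦ (x ↦ x/2)`. -/
def bsf : BSGen → Aff
  | .a => ⟨1, 0⟩
  | .t => ⟨0, -1⟩

lemma bsf_rels : ∀ r ∈ bsRels, FreeGroup.lift bsf r = 1 := by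
  intro r hr
  rw [bsRels, Set.mem_singleton_iff] at hr
  subst hr
  simp only [map_mul, map_inv, map_pow, FreeGroup.lift_apply_of, sq]
  ext <;> simp [bsf] <;> norm_num

/-- The homomorphism `BS(1,2) → Aff`. -/
def φ : PresentedGroup bsRels →* Aff := PresentedGroup.toGroup bsf_rels

lemma φ_mk (x : FreeGroup BSGen) : φ (PresentedGroup.mk bsRels x) = FreeGroup.lift bsf x := rfl

@[simp] lemma φ_T : φ T = ⟨0, -1⟩ := PresentedGroup.toGroup.of bsf_rels
@[simp] lemma φ_A : φ A = ⟨1, 0⟩ := PresentedGroup.toGroup.of bsf_rels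

lemma Tg_zpow (n : ℤ) : (⟨0, -1⟩ : Aff) ^ n = ⟨0, -n⟩ := by
  induction n using Int.induction_on with
  | zero => rfl
  | succ k ih => rw [zpow_add_one, ih]; ext <;> simp <;> ring
  | pred k ih =>
      have : (-(k : ℤ) - 1) = (-(k : ℤ)) - 1 := rfl
      rw [this, zpow_sub_one, ih]; ext <;> simp <;> ring

lemma Ag_zpow (n : ℤ) : (⟨1, 0⟩ : Aff) ^ n = ⟨n, 0⟩ := by
  induction n using Int.induction_on with
  | zero => rfl
  | succ k ih => rw [zpow_add_one, ih]; ext <;> push_cast <;> simp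
  | pred k ih => rw [zpow_sub_one, ih]; ext <;> push_cast <;> simp [sub_eq_add_neg]

lemma φ_Tz (n : ℤ) : φ (T ^ n) = ⟨0, -n⟩ := by rw [map_zpow, φ_T, Tg_zpow]
lemma φ_Az (n : ℤ) : φ (A ^ n) = ⟨n, 0⟩ := by rw [map_zpow, φ_A, Ag_zpow]

/-- Value of a word in `Aff`. -/
def wval (w : List (BSGen × Bool)) : Aff :=
  (w.map fun x => cond x.2 (bsf x.1) (bsf x.1)⁻¹).prod

lemma wval_spec (w : List (BSGen × Bool)) :
    ∃ z : ℤ, (wval w).b = (z : ℚ) / 2 ^ (w.count (BSGen.t, true)) ∧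
      (wval w).e = (w.count (BSGen.t, false) : ℤ) - w.count (BSGen.t, true) := by
  induction w with
  | nil => exact ⟨0, by simp [wval]⟩
  | cons x w ih =>
    obtain ⟨z, hb, he⟩ := ih
    have hw : wval (x :: w) = (cond x.2 (bsf x.1) (bsf x.1)⁻¹) * wval w := by
      simp [wval]
    obtain ⟨g, b⟩ := x
    have h2 : (2 : ℚ) ^ (w.count (BSGen.t, true)) ≠ 0 := by positivity
    cases g <;> cases b
    · -- (a, false)
      refine ⟨z - 2 ^ (w.count (BSGen.t, true)), ?_, ?_⟩
      · simp only [hw, Aff.mul_b, bsf, Aff.inv_b, Aff.inv_e, List.count_cons, hb]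
        simp
        push_cast
        field_simp
        ring
      · simp [hw, bsf, List.count_cons, he]
    · -- (a, true)
      refine ⟨z + 2 ^ (w.count (BSGen.t, true)), ?_, ?_⟩
      · simp only [hw, Aff.mul_b, bsf, List.count_cons, hb]
        simp
        push_cast
        field_simp
        ring
      · simp [hw, bsf, List.count_cons, he]
    · -- (t, false)
      refine ⟨2 * z, ?_, ?_⟩
      · simp only [hw, Aff.mul_b, bsf, Aff.inv_b, Aff.inv_e, List.count_cons, hb]
        simp
        push_cast
        field_simp
        try ring
      · simp [hw, bsf, List.count_cons, he]
        try push_cast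
        try ring
    · -- (t, true)
      refine ⟨z, ?_, ?_⟩
      · simp only [hw, Aff.mul_b, bsf, List.count_cons, hb]
        simp only [cond_true, zpow_neg, zpow_one]
        norm_num [pow_succ]
        rw [div_mul_div_comm, one_mul, mul_comm]
      · simp [hw, bsf, List.count_cons, he]
        try push_cast
        try ring

lemma filter_eq_counts (w : List (BSGen × Bool)) :
    (w.filter (fun p => p.1 = BSGen.t)).length
      = w.count (BSGen.t, true) + w.count (BSGen.t, false) := by
  induction w with
  | nil => rfl
  | cons x w ih =>
    obtain ⟨g, b⟩ := x
    cases g <;> cases b <;> simp [List.count_cons, List.filter_cons, ih] <;> omega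

lemma bs_rel : T⁻¹ * A * T = A ^ (2 : ℕ) := by
  have h : PresentedGroup.mk bsRels ((FreeGroup.of BSGen.t)⁻¹ * FreeGroup.of BSGen.a *
      FreeGroup.of BSGen.t * (FreeGroup.of BSGen.a ^ 2)⁻¹) = 1 := by
    apply (QuotientGroup.eq_one_iff _).mpr
    exact Subgroup.subset_normalClosure rfl
  have h' : T⁻¹ * A * T * (A ^ (2 : ℕ))⁻¹ = 1 := by
    simpa [map_mul, map_inv, map_pow, T, A, PresentedGroup.of] using h
  have := mul_eq_one_iff_eq_inv.mp h'
  simpa using this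

lemma bs_rel_zpow (k : ℤ) : T⁻¹ * A ^ k * T = A ^ (2 * k) := by
  have : T⁻¹ * A ^ k * (T⁻¹)⁻¹ = (T⁻¹ * A * (T⁻¹)⁻¹) ^ k := conj_zpow.symm
  rw [inv_inv] at this
  rw [this, bs_rel, ← zpow_natCast A 2, ← zpow_mul]
  norm_num

theorem t_letters_lower_bound (l l' : ℕ) (hl : 1 ≤ l) (hl' : 1 ≤ l') :
    T ^ (l : ℤ) * A ^ (-((2 : ℤ) ^ (l' + 1) - 2)) * T ^ (-(l' : ℤ))
      = T ^ ((l : ℤ) - 1) * A ^ (-((2 : ℤ) ^ l' - 1)) * T ^ (-((l' : ℤ) - 1)) ∧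
    ∀ w : List (BSGen × Bool),
      PresentedGroup.mk bsRels (FreeGroup.mk w)
          = T ^ (l : ℤ) * A ^ (-((2 : ℤ) ^ (l' + 1) - 2)) * T ^ (-(l' : ℤ)) →
        (l - 1) + (l' - 1) ≤ (w.filter (fun p => p.1 = BSGen.t)).length := by
  constructor
  · have h2 : A ^ (-((2 : ℤ) ^ (l' + 1) - 2)) = T⁻¹ * A ^ (-((2 : ℤ) ^ l' - 1)) * T := by
      rw [bs_rel_zpow]
      congr 1
      rw [pow_succ]
      ring
    rw [h2]
    group
  · intro w hw
    have h := congrArg φ hw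
    rw [φ_mk, FreeGroup.lift_mk] at h
    have hrhs : φ (T ^ (l : ℤ) * A ^ (-((2 : ℤ) ^ (l' + 1) - 2)) * T ^ (-(l' : ℤ)))
        = ⟨2 ^ (-(l : ℤ)) * (-((2 : ℚ) ^ (l' + 1) - 2)), (l' : ℤ) - l⟩ := by
      rw [map_mul, map_mul, φ_Tz, φ_Az, φ_Tz]
      ext <;> simp <;> push_cast <;> ring
    rw [hrhs] at h
    obtain ⟨z, hb, he⟩ := wval_spec w
    set p := w.count (BSGen.t, true) with hp
    set q := w.count (BSGen.t, false) with hq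
    have hwv : (w.map fun x => cond x.2 (bsf x.1) (bsf x.1)⁻¹).prod = wval w := rfl
    rw [hwv] at h
    have hbb : (z : ℚ) / 2 ^ p = 2 ^ (-(l : ℤ)) * (-((2 : ℚ) ^ (l' + 1) - 2)) := by
      rw [← hb, h]
    have hee : (q : ℤ) - p = (l' : ℤ) - l := by rw [← he, h]
    -- turn hbb into an integer equation
    have hZ : z * 2 ^ l = 2 ^ (p + 1) * (1 - 2 ^ l') := by
      have h2l : (2 : ℚ) ^ (-(l : ℤ)) = ((2 : ℚ) ^ l)⁻¹ := by
        rw [zpow_neg, zpow_natCast]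
      rw [h2l] at hbb
      have hQ : (z : ℚ) * 2 ^ l = 2 ^ (p + 1) * (1 - 2 ^ l') := by
        field_simp at hbb
        rw [hbb]; ring
      exact_mod_cast hQ
    -- p + 1 ≥ l
    have hpl : (l : ℤ) ≤ (p : ℤ) + 1 := by
      by_contra hcon
      push_neg at hcon
      have hl2 : p + 2 ≤ l := by exact_mod_cast hcon
      obtain ⟨d, hd⟩ := Nat.exists_eq_add_of_le hl2
      rw [hd, pow_add, pow_add] at hZ
      have hcancel : z * (2 ^ 2 * 2 ^ d) = 2 * (1 - 2 ^ l') := by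
        have h2p : ((2 : ℤ) ^ p) ≠ 0 := by positivity
        have h' : (2:ℤ) ^ p * (z * (2 ^ 2 * 2 ^ d)) = 2 ^ p * (2 * (1 - 2 ^ l')) := by
          rw [pow_succ] at hZ
          linear_combination hZ
        exact mul_left_cancel₀ h2p h'
      obtain ⟨m, hm⟩ := Nat.exists_eq_add_of_le hl'
      rw [hm, pow_add, pow_one] at hcancel
      have hK : (0:ℤ) < 2 ^ m := by positivity
      set K := (2:ℤ) ^ m
      set c := z * 2 ^ d with hc
      have : 2 * (2 * c) = 2 * (1 - 2 * K) := by rw [← hcancel]; ring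
      omega
    have hqe : (q : ℤ) = (p : ℤ) + l' - l := by omega
    rw [filter_eq_counts, ← hp, ← hq]
    omega
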